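/- (Strict interlacing.) Let N ≥ 2, let J be an N×N real symmetric tridiagonal matrix with nonzero off-diagonal entries, let ε_0 < ε_1 < … < ε_{N−1} be its eigenvalues, and let ε̂_0 < … < ε̂_{N−2} be the eigenvalues of the (N−1)×(N−1) submatrix of J obtained by deleting its first row and first column. Then the two spectra strictly interlace: ε_0 < ε̂_0 < ε_1 < ε̂_1 < ε_2 < … < ε̂_{N−2} < ε_{N−1}. -/

import Mathlib

open Matrix Polynomial

namespace TriInterlace

lemma jacobi_ker (m : ℕ) (A : Matrix (Fin (m+1)) (Fin (m+1)) ℝ)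
    (htri : ∀ i j : Fin (m+1), (i:ℕ)+2 ≤ (j:ℕ) → A i j = 0)
    (hoff : ∀ i j : Fin (m+1), (i:ℕ)+1 = (j:ℕ) → A i j ≠ 0)
    (t : ℝ) (u : Fin (m+1) → ℝ) (hu : A *ᵥ u = t • u) (h0 : u 0 = 0) :
    u = 0 := by
  have key : ∀ n : ℕ, ∀ hn : n < m+1, u ⟨n, hn⟩ = 0 := by
    intro n
    induction n using Nat.strong_induction_on with
    | _ n IH =>
      intro hn
      match n, hn with
      | 0, hn => exact h0
      | s+1, hn =>
        have hs : s < m+1 := by omega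
        have hrow := congrFun hu ⟨s, hs⟩
        simp only [Matrix.mulVec, dotProduct, Pi.smul_apply, smul_eq_mul] at hrow
        have hsum : ∑ j, A ⟨s, hs⟩ j * u j = A ⟨s, hs⟩ ⟨s+1, hn⟩ * u ⟨s+1, hn⟩ := by
          apply Finset.sum_eq_single
          · intro j _ hj
            rcases lt_or_ge (j : ℕ) (s+1) with h | h
            · have hz := IH (j : ℕ) (by omega) j.isLt
              simp only [Fin.eta] at hz
              rw [hz, mul_zero]
            · have hge : (s:ℕ) + 2 ≤ (j : ℕ) := by
                have : (j : ℕ) ≠ s + 1 := fun hc => hj (Fin.ext hc)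
                omega
              rw [htri _ _ hge, zero_mul]
          · intro h; exact absurd (Finset.mem_univ _) h
        rw [hsum] at hrow
        have hus : u ⟨s, hs⟩ = 0 := IH s (by omega) hs
        rw [hus, mul_zero] at hrow
        exact (mul_eq_zero.mp hrow).resolve_left (hoff ⟨s, hs⟩ ⟨s+1, hn⟩ rfl)
  funext j
  have := key (j : ℕ) j.isLt
  simpa only [Fin.eta, Pi.zero_apply] using this

lemma exists_eigvec (n : ℕ) (A : Matrix (Fin n) (Fin n) ℝ) {t : ℝ}
    (h : Module.End.HasEigenvalue A.mulVecLin t) : ∃ v, v ≠ 0 ∧ A *ᵥ v = t • v := by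
  obtain ⟨v, hv⟩ := h.exists_hasEigenvector
  exact ⟨v, hv.2, by simpa [Matrix.mulVecLin_apply] using hv.apply_eq_smul⟩

lemma det_eq_zero_of_eig (n : ℕ) (A : Matrix (Fin n) (Fin n) ℝ) {t : ℝ}
    (h : Module.End.HasEigenvalue A.mulVecLin t) :
    Matrix.det (t • (1 : Matrix (Fin n) (Fin n) ℝ) - A) = 0 := by
  obtain ⟨v, hv0, hv⟩ := exists_eigvec n A h
  apply (Matrix.exists_mulVec_eq_zero_iff).mp
  refine ⟨v, hv0, ?_⟩
  rw [Matrix.sub_mulVec, Matrix.smul_mulVec, Matrix.one_mulVec, hv, sub_self]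

lemma eval_charpoly' (n : ℕ) (A : Matrix (Fin n) (Fin n) ℝ) (x : ℝ) :
    (Matrix.charpoly A).eval x = Matrix.det (x • (1 : Matrix (Fin n) (Fin n) ℝ) - A) := by
  rw [Matrix.charpoly, eval_det, matPolyEquiv_charmatrix]
  congr 1
  ext i j
  simp [Matrix.scalar_apply, Matrix.one_apply, Matrix.diagonal, smul_eq_mul, Matrix.sub_apply]


lemma det_eq_prod (n : ℕ) (hn : 0 < n) (A : Matrix (Fin n) (Fin n) ℝ)
    (μ : Fin n → ℝ) (hinj : Function.Injective μ)
    (heig : ∀ i, Module.End.HasEigenvalue A.mulVecLin (μ i)) (x : ℝ) :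
    Matrix.det (x • (1 : Matrix (Fin n) (Fin n) ℝ) - A) = ∏ i, (x - μ i) := by
  have hev : ∀ y : ℝ, (Matrix.charpoly A).eval y
      = Matrix.det (y • (1 : Matrix (Fin n) (Fin n) ℝ) - A) := by
    intro y
    rw [Matrix.charpoly, eval_det, matPolyEquiv_charmatrix]
    congr 1
    ext i j
    simp [Matrix.scalar_apply, Matrix.one_apply, Matrix.diagonal, smul_eq_mul, Matrix.sub_apply]
  set P := Matrix.charpoly A with hP
  set Q := ∏ i : Fin n, (X - C (μ i)) with hQ
  have hQm : Q.Monic := monic_prod_of_monic _ _ fun i _ => monic_X_sub_C _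
  have hQd : Q.natDegree = n := by
    rw [hQ, natDegree_prod _ _ fun i _ => X_sub_C_ne_zero _]
    simp
  have hPm : P.Monic := Matrix.charpoly_monic A
  have hPd : P.natDegree = n := by
    rw [hP, Matrix.charpoly_natDegree_eq_dim]
    exact Fintype.card_fin n
  have hQev : ∀ y : ℝ, Q.eval y = ∏ i, (y - μ i) := by
    intro y; rw [hQ, eval_prod]; simp
  have hPQ : P = Q := by
    have hz0 : P - Q = 0 := by
      by_contra hz
      apply hz
      apply Polynomial.eq_zero_of_natDegree_lt_card_of_eval_eq_zero (P - Q) hinj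
      · intro i
        rw [eval_sub, hev, hQev]
        rw [det_eq_zero_of_eig n A (heig i)]
        have hz2 : ∏ j : Fin n, (μ i - μ j) = 0 :=
          Finset.prod_eq_zero (Finset.mem_univ i) (sub_self _)
        rw [hz2, sub_zero]
      · rw [Fintype.card_fin]
        have hdeg : (P - Q).degree < P.degree := by
          apply Polynomial.degree_sub_lt
          · rw [Polynomial.degree_eq_natDegree hPm.ne_zero,
              Polynomial.degree_eq_natDegree hQm.ne_zero, hPd, hQd]
          · exact hPm.ne_zero
          · rw [hPm.leadingCoeff, hQm.leadingCoeff]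
        have : (P - Q).degree < (n : ℕ) := by
          rwa [Polynomial.degree_eq_natDegree hPm.ne_zero, hPd] at hdeg
        exact (Polynomial.natDegree_lt_iff_degree_lt hz).mpr this
    exact sub_eq_zero.mp hz0
  rw [← hev, hPQ, hQev]

lemma adjugate_zero_zero (n : ℕ) (B : Matrix (Fin (n+1)) (Fin (n+1)) ℝ) :
    adjugate B 0 0 = Matrix.det (B.submatrix Fin.succ Fin.succ) := by
  rw [Matrix.adjugate_apply, Matrix.det_succ_row_zero]
  rw [Finset.sum_eq_single 0]
  · have h1 : ((B.updateRow 0 (Pi.single 0 1)).submatrix Fin.succ ((0 : Fin (n+1)).succAbove))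
        = B.submatrix Fin.succ Fin.succ := by
      ext i j
      simp [Matrix.submatrix_apply, Fin.succAbove_zero,
        Matrix.updateRow_ne (Fin.succ_ne_zero i)]
    rw [h1]
    simp [Matrix.updateRow_self]
  · intro j _ hj
    rw [Matrix.updateRow_self, Pi.single_eq_of_ne hj, mul_zero, zero_mul]
  · intro h; exact absurd (Finset.mem_univ _) h

lemma prod_erase_sign (m : ℕ) (ε : Fin (m+1) → ℝ) (hmono : StrictMono ε) (k : Fin (m+1)) :
    0 < (-1:ℝ)^(m - (k:ℕ)) * ∏ j ∈ Finset.univ.erase k, (ε k - ε j) := by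
  have hsplit : Finset.univ.erase k = Finset.Iio k ∪ Finset.Ioi k := by
    ext j
    simp only [Finset.mem_erase, Finset.mem_univ, and_true, Finset.mem_union,
      Finset.mem_Iio, Finset.mem_Ioi]
    exact ne_iff_lt_or_gt
  have hdisj : Disjoint (Finset.Iio k) (Finset.Ioi k) := by
    rw [Finset.disjoint_left]
    intro j hj hj'
    exact absurd (Finset.mem_Ioi.1 hj') (not_lt.2 (le_of_lt (Finset.mem_Iio.1 hj)))
  rw [hsplit, Finset.prod_union hdisj]
  have h1 : 0 < ∏ j ∈ Finset.Iio k, (ε k - ε j) :=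
    Finset.prod_pos fun j hj => sub_pos.2 (hmono (Finset.mem_Iio.1 hj))
  have hc : (Finset.Ioi k).card = m - (k:ℕ) := by
    rw [Fin.card_Ioi]
    omega
  have h2 : ∏ j ∈ Finset.Ioi k, (ε k - ε j)
      = (-1:ℝ)^(m - (k:ℕ)) * ∏ j ∈ Finset.Ioi k, (ε j - ε k) := by
    rw [← hc]
    calc ∏ j ∈ Finset.Ioi k, (ε k - ε j) = ∏ j ∈ Finset.Ioi k, ((-1) * (ε j - ε k)) :=
          Finset.prod_congr rfl fun j _ => by ring
      _ = (-1:ℝ)^(Finset.Ioi k).card * ∏ j ∈ Finset.Ioi k, (ε j - ε k) := by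
          rw [Finset.prod_mul_distrib, Finset.prod_const]
  have h3 : 0 < ∏ j ∈ Finset.Ioi k, (ε j - ε k) :=
    Finset.prod_pos fun j hj => sub_pos.2 (hmono (Finset.mem_Ioi.1 hj))
  rw [h2]
  have hsq : (-1:ℝ)^(m - (k:ℕ)) * (-1:ℝ)^(m - (k:ℕ)) = 1 := by
    rw [← pow_add, ← two_mul, pow_mul]
    norm_num
  calc (0:ℝ) < ((∏ j ∈ Finset.Iio k, (ε k - ε j)) * ∏ j ∈ Finset.Ioi k, (ε j - ε k)) :=
        mul_pos h1 h3
    _ = (-1:ℝ)^(m - (k:ℕ)) * ((∏ j ∈ Finset.Iio k, (ε k - ε j)) *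
        ((-1:ℝ)^(m - (k:ℕ)) * ∏ j ∈ Finset.Ioi k, (ε j - ε k))) := by
        rw [show ∀ a b c : ℝ, a * (b * (a * c)) = (a * a) * (b * c) from fun a b c => by ring,
          hsq, one_mul]


lemma key_sign (N : ℕ) (J : Matrix (Fin (N+1)) (Fin (N+1)) ℝ)
    (hsym : J.IsSymm)
    (htri : ∀ i j : Fin (N+1), (i:ℕ)+2 ≤ (j:ℕ) → J i j = 0)
    (hoff : ∀ i j : Fin (N+1), (i:ℕ)+1 = (j:ℕ) → J i j ≠ 0)
    (ε : Fin (N+1) → ℝ) (hmono : StrictMono ε)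
    (hεeig : ∀ i, Module.End.HasEigenvalue J.mulVecLin (ε i)) (k : Fin (N+1)) :
    0 < Matrix.det (ε k • (1 : Matrix (Fin N) (Fin N) ℝ) - J.submatrix Fin.succ Fin.succ)
      * ∏ j ∈ Finset.univ.erase k, (ε k - ε j) := by
  classical
  have hsym' : ∀ i j, J i j = J j i := fun i j => (congrFun (congrFun hsym i) j).symm
  have hp : ∀ x : ℝ, Matrix.det (x • (1 : Matrix (Fin (N+1)) (Fin (N+1)) ℝ) - J)
      = ∏ i, (x - ε i) := det_eq_prod (N+1) (Nat.succ_pos N) J ε hmono.injective hεeig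
  obtain ⟨v, hv0, hv⟩ := exists_eigvec (N+1) J (hεeig k)
  have hvz : v 0 ≠ 0 := fun h => hv0 (jacobi_ker N J htri hoff (ε k) v hv h)
  set M : Matrix (Fin (N+1)) (Fin (N+1)) ℝ := ε k • 1 - J with hM
  have hMw : ∀ w, M *ᵥ w = ε k • w - J *ᵥ w := by
    intro w
    rw [hM, Matrix.sub_mulVec, Matrix.smul_mulVec, Matrix.one_mulVec]
  have hdet0 : M.det = 0 := by
    rw [hM, hp]
    exact Finset.prod_eq_zero (Finset.mem_univ k) (sub_self _)
  have hker : ∀ w, M *ᵥ w = 0 → w = (w 0 / v 0) • v := by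
    intro w hw
    have hJw : J *ᵥ w = ε k • w := by
      have h1 := hMw w
      rw [hw] at h1
      exact (sub_eq_zero.mp h1.symm).symm
    have h1 : J *ᵥ (w - (w 0 / v 0) • v) = ε k • (w - (w 0 / v 0) • v) := by
      rw [Matrix.mulVec_sub, Matrix.mulVec_smul, hJw, hv, smul_sub, smul_comm]
    have h0 : (w - (w 0 / v 0) • v) 0 = 0 := by
      simp only [Pi.sub_apply, Pi.smul_apply, smul_eq_mul]
      field_simp
      ring
    have hzero := jacobi_ker N J htri hoff (ε k) _ h1 h0
    exact (eq_of_sub_eq_zero hzero)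
  set A := Matrix.adjugate M with hA
  have hcol : ∀ j, M *ᵥ (fun i => A i j) = 0 := by
    intro j
    funext i
    show ∑ l, M i l * A l j = 0
    rw [← Matrix.mul_apply, Matrix.mul_adjugate, hdet0]
    simp
  have hAsymm : ∀ i j, A i j = A j i := by
    intro i j
    have hMt : Mᵀ = M := by
      ext a b
      simp only [hM, Matrix.transpose_apply, Matrix.sub_apply, Matrix.smul_apply,
        Matrix.one_apply, smul_eq_mul]
      rw [hsym' b a]
      by_cases hab : a = b
      · subst hab; simp
      · rw [if_neg hab, if_neg (Ne.symm hab)]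
    have ht := Matrix.adjugate_transpose M
    rw [hMt] at ht
    exact congrFun (congrFun ht j) i
  have hcolv : ∀ j, (fun i => A i j) = (A 0 j / v 0) • v := fun j => hker _ (hcol j)
  set γ : ℝ := A 0 0 / (v 0 * v 0) with hγ
  have hAij : ∀ i j, A i j = γ * v i * v j := by
    intro i j
    have h1 : A i j = (A 0 j / v 0) * v i := by
      have := congrFun (hcolv j) i
      simpa using this
    have h3 : A j 0 = (A 0 0 / v 0) * v j := by
      have := congrFun (hcolv 0) j
      simpa using this
    rw [h1, hAsymm 0 j, h3, hγ]
    field_simp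
  set g : Polynomial ℝ := ∏ j ∈ Finset.univ.erase k, (Polynomial.X - Polynomial.C (ε j))
    with hg
  have hgev : ∀ x : ℝ, g.eval x = ∏ j ∈ Finset.univ.erase k, (x - ε j) := by
    intro x; rw [hg, Polynomial.eval_prod]; simp
  have hAv : A *ᵥ v = (∏ j ∈ Finset.univ.erase k, (ε k - ε j)) • v := by
    have hF : (fun x : ℝ => Matrix.adjugate (x • (1 : Matrix (Fin (N+1)) (Fin (N+1)) ℝ) - J)
        *ᵥ v - g.eval x • v) = fun _ => 0 := by
      apply Continuous.ext_on (dense_compl_singleton (ε k)) ?_ continuous_const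
      · intro x hx
        have hx' : x - ε k ≠ 0 := sub_ne_zero.2 hx
        have hMx : (x • (1 : Matrix (Fin (N+1)) (Fin (N+1)) ℝ) - J) *ᵥ v = (x - ε k) • v := by
          rw [Matrix.sub_mulVec, Matrix.smul_mulVec, Matrix.one_mulVec, hv, ← sub_smul]
        have h2 : Matrix.adjugate (x • (1 : Matrix (Fin (N+1)) (Fin (N+1)) ℝ) - J)
            *ᵥ ((x • (1 : Matrix (Fin (N+1)) (Fin (N+1)) ℝ) - J) *ᵥ v)
            = ((x - ε k) * g.eval x) • v := by
          rw [Matrix.mulVec_mulVec, Matrix.adjugate_mul, Matrix.smul_mulVec,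
            Matrix.one_mulVec, hp, hgev]
          rw [← Finset.mul_prod_erase Finset.univ _ (Finset.mem_univ k)]
        rw [hMx, Matrix.mulVec_smul, mul_smul] at h2
        have h3 := smul_right_injective (Fin (N+1) → ℝ) hx' h2
        show Matrix.adjugate (x • (1 : Matrix (Fin (N+1)) (Fin (N+1)) ℝ) - J) *ᵥ v
          - Polynomial.eval x g • v = 0
        rw [h3, sub_self]
      · have hc1 : Continuous fun x : ℝ => x • (1 : Matrix (Fin (N+1)) (Fin (N+1)) ℝ) - J :=
          ((continuous_id.smul continuous_const).sub continuous_const)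
        exact ((hc1.matrix_adjugate).matrix_mulVec continuous_const).sub
          ((g.continuous).smul continuous_const)
    have hFk := congrFun hF (ε k)
    have := eq_of_sub_eq_zero hFk
    rw [this, hgev]
  have hS : 0 < ∑ j, v j ^ 2 := by
    obtain ⟨i0, hi0⟩ := Function.ne_iff.1 hv0
    apply Finset.sum_pos' (fun j _ => sq_nonneg _)
    exact ⟨i0, Finset.mem_univ _, lt_of_le_of_ne (sq_nonneg _) (Ne.symm (pow_ne_zero 2 hi0))⟩
  set D : ℝ := ∏ j ∈ Finset.univ.erase k, (ε k - ε j) with hD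
  have hγS : γ * (∑ j, v j ^ 2) = D := by
    have h00 := congrFun hAv 0
    have hlhs : (A *ᵥ v) 0 = γ * v 0 * ∑ j, v j ^ 2 := by
      show ∑ j, A 0 j * v j = _
      rw [Finset.mul_sum]
      apply Finset.sum_congr rfl
      intro j _
      rw [hAij 0 j]
      ring
    rw [hlhs] at h00
    have hrhs : (D • v) 0 = D * v 0 := rfl
    rw [hrhs] at h00
    refine mul_right_cancel₀ hvz ?_
    calc γ * (∑ j, v j ^ 2) * v 0 = γ * v 0 * ∑ j, v j ^ 2 := by ring
      _ = D * v 0 := h00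
  have hD0 : D ≠ 0 := by
    rw [hD]
    apply Finset.prod_ne_zero_iff.mpr
    intro j hj
    exact sub_ne_zero.2 fun hc => (Finset.mem_erase.1 hj).1 (hmono.injective hc).symm
  have hγ0 : γ ≠ 0 := fun h => hD0 (by rw [← hγS, h, zero_mul])
  have hcof : Matrix.det (ε k • (1 : Matrix (Fin N) (Fin N) ℝ) - J.submatrix Fin.succ Fin.succ)
      = A 0 0 := by
    rw [hA, adjugate_zero_zero]
    congr 1
    ext i j
    simp only [hM, Matrix.submatrix_apply, Matrix.sub_apply, Matrix.smul_apply,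
      Matrix.one_apply, smul_eq_mul]
    congr 1
    by_cases hij : i = j
    · subst hij; simp
    · rw [if_neg hij, if_neg (fun hc => hij (Fin.succ_injective _ hc))]
  rw [hcof, hAij 0 0, ← hγS]
  have : γ * v 0 * v 0 * (γ * ∑ j, v j ^ 2) = (γ * v 0)^2 * ∑ j, v j ^ 2 := by ring
  rw [this]
  have hp1 : 0 < (γ * v 0)^2 :=
    lt_of_le_of_ne (sq_nonneg _) (Ne.symm (pow_ne_zero 2 (mul_ne_zero hγ0 hvz)))
  exact mul_pos hp1 hS

end TriInterlace

open TriInterlace in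
theorem tridiagonal_interlacing
    (N : ℕ) (hN : 1 ≤ N) (J : Matrix (Fin (N + 1)) (Fin (N + 1)) ℝ)
    (hsym : J.IsSymm)
    (htri : ∀ i j : Fin (N + 1), (i : ℕ) + 2 ≤ (j : ℕ) → J i j = 0)
    (hoff : ∀ i j : Fin (N + 1), (i : ℕ) + 1 = (j : ℕ) → J i j ≠ 0)
    (ε : Fin (N + 1) → ℝ) (hmono : StrictMono ε)
    (hεeig : ∀ i, Module.End.HasEigenvalue J.mulVecLin (ε i))
    (hεall : ∀ t : ℝ, Module.End.HasEigenvalue J.mulVecLin t → ∃ i, t = ε i)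
    (ε' : Fin N → ℝ) (hmono' : StrictMono ε')
    (hε'eig : ∀ i, Module.End.HasEigenvalue
      (J.submatrix Fin.succ Fin.succ).mulVecLin (ε' i))
    (hε'all : ∀ t : ℝ, Module.End.HasEigenvalue
      (J.submatrix Fin.succ Fin.succ).mulVecLin t → ∃ i, t = ε' i) :
    ∀ i : Fin N, ε i.castSucc < ε' i ∧ ε' i < ε i.succ := by
  classical
  rcases Nat.exists_eq_succ_of_ne_zero (by omega : N ≠ 0) with ⟨N', rfl⟩
  set Jh : Matrix (Fin (N'+1)) (Fin (N'+1)) ℝ := J.submatrix Fin.succ Fin.succ with hJh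
  have hq : ∀ x : ℝ, Matrix.det (x • (1 : Matrix (Fin (N'+1)) (Fin (N'+1)) ℝ) - Jh)
      = ∏ i, (x - ε' i) :=
    det_eq_prod (N'+1) (Nat.succ_pos N') Jh ε' hmono'.injective hε'eig
  have key : ∀ k : Fin (N'+1+1),
      0 < Matrix.det (ε k • (1 : Matrix (Fin (N'+1)) (Fin (N'+1)) ℝ) - Jh)
        * ∏ j ∈ Finset.univ.erase k, (ε k - ε j) :=
    key_sign (N'+1) J hsym htri hoff ε hmono hεeig
  set q : ℝ → ℝ := fun x => ∏ i, (x - ε' i) with hqdef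
  have halt : ∀ k : Fin (N'+1), q (ε k.castSucc) * q (ε k.succ) < 0 := by
    intro k
    have h1 := key k.castSucc
    have h2 := key k.succ
    rw [hq] at h1 h2
    have s1 := prod_erase_sign (N'+1) ε hmono k.castSucc
    have s2 := prod_erase_sign (N'+1) ε hmono k.succ
    have he : (-1:ℝ)^(N'+1 - ((k.castSucc : Fin (N'+1+1)) : ℕ))
        = -(-1:ℝ)^(N'+1 - ((k.succ : Fin (N'+1+1)) : ℕ)) := by
      rw [Fin.coe_castSucc, Fin.val_succ]
      have hkk : (k : ℕ) < N'+1 := k.isLt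
      rw [show N'+1 - (k:ℕ) = (N'+1 - ((k:ℕ)+1)) + 1 by omega, pow_succ]
      ring
    rw [he] at s1
    have he2 : ((-1:ℝ)^(N'+1 - ((k.succ : Fin (N'+1+1)) : ℕ)))^2 = 1 := by
      rw [← pow_mul, mul_comm, pow_mul]
      norm_num
    have hD12 : (∏ j ∈ Finset.univ.erase (k.castSucc), (ε k.castSucc - ε j))
        * (∏ j ∈ Finset.univ.erase (k.succ), (ε k.succ - ε j)) < 0 := by
      nlinarith [mul_pos s1 s2]
    nlinarith [mul_pos h1 h2]
  have hqc : Continuous q := by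
    apply continuous_finset_prod
    intro i _
    exact continuous_id.sub continuous_const
  have hroot : ∀ k : Fin (N'+1), ∃ r, r ∈ Set.Ioo (ε k.castSucc) (ε k.succ) ∧ q r = 0 := by
    intro k
    have hab : ε k.castSucc ≤ ε k.succ := le_of_lt (hmono k.castSucc_lt_succ)
    rcases lt_or_ge (q (ε k.castSucc)) 0 with h | h
    · have hb : 0 < q (ε k.succ) := by nlinarith [halt k]
      obtain ⟨r, hr, hr0⟩ := intermediate_value_Ioo hab hqc.continuousOn
        (Set.mem_Ioo.2 ⟨h, hb⟩)
      exact ⟨r, hr, hr0⟩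
    · have ha : 0 < q (ε k.castSucc) := by
        rcases h.lt_or_eq with h' | h'
        · exact h'
        · exfalso
          have hh := halt k
          rw [← h', zero_mul] at hh
          exact lt_irrefl 0 hh
      have hb : q (ε k.succ) < 0 := by nlinarith [halt k]
      obtain ⟨r, hr, hr0⟩ := intermediate_value_Ioo' hab hqc.continuousOn
        (Set.mem_Ioo.2 ⟨hb, ha⟩)
      exact ⟨r, hr, hr0⟩
  choose r hrmem hrzero using hroot
  have hidx : ∀ k, ∃ i, r k = ε' i := by
    intro k
    have h := hrzero k
    rw [hqdef] at h
    obtain ⟨i, _, hi⟩ := Finset.prod_eq_zero_iff.mp h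
    exact ⟨i, by linarith [sub_eq_zero.mp hi]⟩
  choose idx hidxeq using hidx
  have hmonoidx : StrictMono idx := by
    intro k l hkl
    have hks : ε k.succ ≤ ε l.castSucc := by
      apply hmono.monotone
      rw [Fin.le_def, Fin.val_succ, Fin.coe_castSucc]
      exact hkl
    have h1 : ε' (idx k) < ε' (idx l) := by
      rw [← hidxeq k, ← hidxeq l]
      have hk2 := (hrmem k).2
      have hl1 := (hrmem l).1
      linarith
    exact hmono'.lt_iff_lt.mp h1
  have hid : idx = id := by
    apply (StrictMono.range_inj hmonoidx strictMono_id).mp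
    rw [Set.range_id]
    exact Set.range_eq_univ.mpr (Finite.surjective_of_injective hmonoidx.injective)
  intro k
  have hk1 := (hrmem k).1
  have hk2 := (hrmem k).2
  have : ε' k = r k := by
    rw [hidxeq k, hid]; rfl
  rw [this]
  exact ⟨hk1, hk2⟩
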